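/- arXiv:2503.15088 — 7 statements merged into one kernel-verified Lean document; each statement's English description precedes it below -/
import Mathlib

section
/- Let G be a finite group and ω : G³ → U(1) a function satisfying the 3-cocycle condition ω(g₂,g₃,g₄)·ω(g₁,g₂g₃,g₄)·ω(g₁,g₂,g₃) = ω(g₁g₂,g₃,g₄)·ω(g₁,g₂,g₃g₄) for all g₁,g₂,g₃,g₄ ∈ G. Then the slant product τ(ω), defined by τ(ω)_g(k,l) = ω(g,k,l)·ω(k,l,l⁻¹k⁻¹gkl) / ω(k,k⁻¹gk,l), satisfies the twisted 2-cocycle condition: for all g,k,l,m ∈ G, τ(ω)_{k⁻¹gk}(l,m)·τ(ω)_g(k,lm) = τ(ω)_g(kl,m)·τ(ω)_g(k,l). -/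
/-- The slant product `τ(ω)_g(k,l) = ω(g,k,l)·ω(k,l,l⁻¹k⁻¹gkl)/ω(k,k⁻¹gk,l)`. -/
noncomputable def slant {G : Type*} [Group G] (ω : G → G → G → Circle) :
    G → G → G → Circle :=
  fun g k l => ω g k l * ω k l (l⁻¹ * k⁻¹ * g * k * l) / ω k (k⁻¹ * g * k) l

/-- the slant product of a 3-cocycle is a twisted 2-cocycle. -/
theorem slant_isTwistedTwoCocycle {G : Type*} [Group G] [Fintype G]
    (ω : G → G → G → Circle)
    (hω : ∀ g₁ g₂ g₃ g₄ : G,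
      ω g₂ g₃ g₄ * ω g₁ (g₂ * g₃) g₄ * ω g₁ g₂ g₃ =
        ω (g₁ * g₂) g₃ g₄ * ω g₁ g₂ (g₃ * g₄)) :
    ∀ g k l m : G,
      slant ω (k⁻¹ * g * k) l m * slant ω g k (l * m) =
        slant ω g (k * l) m * slant ω g k l := by
  intro g k l m
  have h1 := congrArg (fun z : Circle => (z : ℂ)) (hω g k l m)
  have h2 := congrArg (fun z : Circle => (z : ℂ)) (hω k (k⁻¹ * g * k) l m)
  have h3 := congrArg (fun z : Circle => (z : ℂ)) (hω k l (l⁻¹ * k⁻¹ * g * k * l) m)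
  have h4 := congrArg (fun z : Circle => (z : ℂ)) (hω k l m (m⁻¹ * l⁻¹ * k⁻¹ * g * k * l * m))
  rw [← Circle.coe_inj]
  simp only [slant, Circle.coe_mul, Circle.coe_div, mul_inv_rev, mul_assoc,
    inv_mul_cancel_left, mul_inv_cancel_left] at h1 h2 h3 h4 ⊢
  rw [div_mul_div_comm, div_mul_div_comm, div_eq_div_iff (by simp [mul_ne_zero_iff]) (by simp [mul_ne_zero_iff])]
  have hPQ : ((ω k l m : ℂ) * ((ω g (k * l) m : ℂ) * (ω g k l : ℂ))) *
      ((ω l (l⁻¹ * (k⁻¹ * (g * (k * l)))) m : ℂ) * ((ω k (k⁻¹ * (g * (k * l))) m : ℂ) *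
        (ω k l (l⁻¹ * (k⁻¹ * (g * (k * l)))) : ℂ))) *
      ((ω (g * k) l m : ℂ) * (ω k (k⁻¹ * (g * k)) (l * m) : ℂ)) *
      ((ω (k * l) m (m⁻¹ * (l⁻¹ * (k⁻¹ * (g * (k * (l * m)))))) : ℂ) *
        (ω k l (l⁻¹ * (k⁻¹ * (g * (k * (l * m))))) : ℂ)) =
      ((ω (g * k) l m : ℂ) * (ω g k (l * m) : ℂ)) *
      ((ω (k * l) (l⁻¹ * (k⁻¹ * (g * (k * l)))) m : ℂ) *
        (ω k l (l⁻¹ * (k⁻¹ * (g * (k * (l * m))))) : ℂ)) *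
      ((ω (k⁻¹ * (g * k)) l m : ℂ) * ((ω k (k⁻¹ * (g * (k * l))) m : ℂ) *
        (ω k (k⁻¹ * (g * k)) l : ℂ))) *
      ((ω l m (m⁻¹ * (l⁻¹ * (k⁻¹ * (g * (k * (l * m)))))) : ℂ) *
        ((ω k (l * m) (m⁻¹ * (l⁻¹ * (k⁻¹ * (g * (k * (l * m)))))) : ℂ) * (ω k l m : ℂ))) := by
    rw [h1, h3, ← h2, ← h4]
  apply mul_right_cancel₀ (b := ((ω (g * k) l m : ℂ) * (ω g k (l * m) : ℂ)) *
      ((ω (k * l) (l⁻¹ * (k⁻¹ * (g * (k * l)))) m : ℂ) *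
        (ω k l (l⁻¹ * (k⁻¹ * (g * (k * (l * m))))) : ℂ)) *
      ((ω (k⁻¹ * (g * k)) l m : ℂ) * ((ω k (k⁻¹ * (g * (k * l))) m : ℂ) *
        (ω k (k⁻¹ * (g * k)) l : ℂ))) *
      ((ω l m (m⁻¹ * (l⁻¹ * (k⁻¹ * (g * (k * (l * m)))))) : ℂ) *
        ((ω k (l * m) (m⁻¹ * (l⁻¹ * (k⁻¹ * (g * (k * (l * m)))))) : ℂ) * (ω k l m : ℂ))))
    (by simp [mul_ne_zero_iff])
  conv_lhs => rw [← hPQ]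
  ring
end

section
/- Let G be a finite group, and ω a 3-cocycle on G with values in U(1). If ω' = ω·δξ, where (δξ)(g₁,g₂,g₃) = ξ(g₂,g₃)·ξ(g₁,g₂g₃) / (ξ(g₁g₂,g₃)·ξ(g₁,g₂)) for some ξ : G² → U(1), then the slant products τ(ω') and τ(ω) differ by a twisted 2-coboundary: there exists ε : G → U(1)[G] with τ(ω')_g(k,l) / τ(ω)_g(k,l) = ε_{k⁻¹gk}(l)·ε_g(k) / ε_g(kl) for all g,k,l ∈ G. Hence the slant product induces a well-defined map H³(G,U(1)) → H²(G,U(1)[G]). -/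
/-- if ω' = ω·δξ then τ(ω') and τ(ω) differ by a twisted 2-coboundary;
hence the slant product induces a well-defined map H³(G,U(1)) → H²(G,U(1)[G]). -/
theorem slant_of_coboundary {G : Type*} [Group G] [Fintype G]
    (ω : G → G → G → Circle)
    (hω : ∀ g₁ g₂ g₃ g₄ : G,
      ω g₂ g₃ g₄ * ω g₁ (g₂ * g₃) g₄ * ω g₁ g₂ g₃ =
        ω (g₁ * g₂) g₃ g₄ * ω g₁ g₂ (g₃ * g₄))
    (ξ : G → G → Circle) (ω' : G → G → G → Circle)
    (hω' : ∀ g₁ g₂ g₃ : G,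
      ω' g₁ g₂ g₃ =
        ω g₁ g₂ g₃ *
          (ξ g₂ g₃ * ξ g₁ (g₂ * g₃) / (ξ (g₁ * g₂) g₃ * ξ g₁ g₂))) :
    ∃ ε : G → G → Circle,
      ∀ g k l : G,
        slant ω' g k l / slant ω g k l =
          ε (k⁻¹ * g * k) l * ε g k / ε g (k * l) := by
  refine ⟨fun g k => ξ k (k⁻¹ * g * k) / ξ g k, fun g k l => ?_⟩
  simp only [slant, hω', mul_assoc, mul_inv_cancel_left, inv_mul_cancel_left, mul_inv_rev]
  apply Subtype.ext
  push_cast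
  field_simp
end

section
/- Let G be a finite group, let ω : G³ → U(1) be a 3-cocycle, and consider the Hilbert space ℂ[G] with basis {|g⟩ : g ∈ G}. Define for j ∈ {a,...,b} diagonal unitaries via the action on basis vectors |g_a,...,g_b⟩ of ℂ[G]^{⊗(b-a+1)}: U_I^{(h)} |g_a,...,g_b⟩ = (∏_{j=a+1}^{b} ω(h, g_j, g_j⁻¹g_{j-1})) · |hg_a,...,hg_b⟩. Then U_I^{(g)} U_I^{(h)} (U_I^{(gh)})* = Φ_a(g,h) · Φ_b(g,h)*, where Φ_j(g,h) is the diagonal operator acting on the j-th tensor factor by Φ_j(g,h)|g_j⟩ = ω(g,h,h⁻¹g⁻¹g_j)|g_j⟩. -/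
open Matrix

variable {G : Type*} [Group G] [Fintype G] [DecidableEq G]

/-- The unitary `U_I^{(h)}` on `⊗_{j=0}^{n} ℂ[G]` (sites `a,…,b` re-indexed as
`0,…,n`), acting on basis vectors by
`U_I^{(h)}|g_0,…,g_n⟩ = (∏_{j=1}^{n} ω(h,g_j,g_j⁻¹g_{j-1}))·|hg_0,…,hg_n⟩`. -/
noncomputable def UI (ω : G → G → G → Circle) (n : ℕ) (h : G) :
    Matrix (Fin (n + 1) → G) (Fin (n + 1) → G) ℂ :=
  Matrix.of fun x y =>
    if x = fun j => h * y j then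
      ∏ j : Fin n, (ω h (y j.succ) ((y j.succ)⁻¹ * y j.castSucc) : ℂ)
    else 0

/-- The diagonal fusion operator acting on the leftmost tensor factor:
`Φ_a(g,h)|g_0,…,g_n⟩ = ω(g,h,h⁻¹g⁻¹g_0)|g_0,…,g_n⟩`. -/
noncomputable def PhiLeft (ω : G → G → G → Circle) (n : ℕ) (g h : G) :
    Matrix (Fin (n + 1) → G) (Fin (n + 1) → G) ℂ :=
  Matrix.diagonal fun y => (ω g h (h⁻¹ * g⁻¹ * y 0) : ℂ)

/-- The diagonal fusion operator acting on the rightmost tensor factor: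
`Φ_b(g,h)|g_0,…,g_n⟩ = ω(g,h,h⁻¹g⁻¹g_n)|g_0,…,g_n⟩`. -/
noncomputable def PhiRight (ω : G → G → G → Circle) (n : ℕ) (g h : G) :
    Matrix (Fin (n + 1) → G) (Fin (n + 1) → G) ℂ :=
  Matrix.diagonal fun y => (ω g h (h⁻¹ * g⁻¹ * y (Fin.last n)) : ℂ)

private lemma coe_prod' {α : Type*} (s : Finset α) (f : α → Circle) :
    ((∏ i ∈ s, f i : Circle) : ℂ) = ∏ i ∈ s, (f i : ℂ) :=
  map_prod Circle.coeHom f s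

private lemma star_coe' (z : Circle) : star (z : ℂ) = ((z⁻¹ : Circle) : ℂ) := by
  rw [Circle.coe_inv_eq_conj]; rfl

private lemma telescope' {M : Type*} [CommGroup M] {n : ℕ} (F : Fin (n+1) → M) :
    ∏ j : Fin n, F j.castSucc / F j.succ = F 0 / F (Fin.last n) := by
  induction n with
  | zero => simp
  | succ m ih =>
    rw [Fin.prod_univ_castSucc]
    have h1 := ih (fun i => F i.castSucc)
    simp only [Fin.succ_castSucc]
    rw [h1, Fin.castSucc_zero, Fin.succ_last]
    rw [show Fin.last m.succ = Fin.last (m + 1) from rfl]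
    exact div_mul_div_cancel _ _ _

private lemma cocycle_step (ω : G → G → G → Circle)
    (hω : ∀ g₁ g₂ g₃ g₄ : G,
      ω g₂ g₃ g₄ * ω g₁ (g₂ * g₃) g₄ * ω g₁ g₂ g₃ =
        ω (g₁ * g₂) g₃ g₄ * ω g₁ g₂ (g₃ * g₄))
    (g h p q : G) :
    ω g (g⁻¹ * p) (p⁻¹ * q) * ω h (h⁻¹ * (g⁻¹ * p)) (p⁻¹ * q) *
      (ω (g * h) (h⁻¹ * (g⁻¹ * p)) (p⁻¹ * q))⁻¹ =
      ω g h (h⁻¹ * (g⁻¹ * q)) / ω g h (h⁻¹ * (g⁻¹ * p)) := by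
  have h1 := hω g h (h⁻¹ * (g⁻¹ * p)) (p⁻¹ * q)
  rw [mul_inv_cancel_left, show h⁻¹ * (g⁻¹ * p) * (p⁻¹ * q) = h⁻¹ * (g⁻¹ * q) by group] at h1
  rw [← div_eq_mul_inv, div_eq_div_iff_mul_eq_mul, mul_comm (ω g h (h⁻¹ * (g⁻¹ * q))) _, ← h1]
  rw [mul_comm (ω g (g⁻¹ * p) (p⁻¹ * q)) (ω h (h⁻¹ * (g⁻¹ * p)) (p⁻¹ * q))]

private lemma shift_mul {n : ℕ} (c d : (Fin (n+1) → G) → ℂ) (g h : G) :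
    ((Matrix.of fun x y : Fin (n+1) → G => if x = fun j => g * y j then c y else 0) *
      Matrix.of fun y z : Fin (n+1) → G => if y = fun j => h * z j then d z else 0) =
      Matrix.of fun x z : Fin (n+1) → G =>
        if x = fun j => (g * h) * z j then c (fun j => h * z j) * d z else 0 := by
  ext x z
  rw [Matrix.mul_apply, Finset.sum_eq_single (fun j => h * z j)]
  · simp [mul_assoc, ite_mul]
  · intro y _ hy
    simp [hy]
  · intro hmem; exact absurd (Finset.mem_univ _) hmem

private lemma shift_mul_conjT {n : ℕ} (C D : (Fin (n+1) → G) → ℂ) (k : G) :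
    ((Matrix.of fun x z : Fin (n+1) → G => if x = fun j => k * z j then C z else 0) *
      (Matrix.of fun x z : Fin (n+1) → G => if x = fun j => k * z j then D z else 0)ᴴ) =
      Matrix.of fun x w : Fin (n+1) → G =>
        if x = w then C (fun j => k⁻¹ * x j) * star (D (fun j => k⁻¹ * x j)) else 0 := by
  ext x w
  rw [Matrix.mul_apply, Finset.sum_eq_single (fun j => k⁻¹ * x j)]
  · have hx : (fun j => k * (k⁻¹ * x j)) = x := by funext j; simp
    simp [Matrix.conjTranspose_apply, hx, apply_ite star, eq_comm, ite_mul, mul_ite]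
  · intro z _ hz
    have : x ≠ fun j => k * z j := by
      rintro rfl
      exact hz (by funext j; simp)
    simp [this]
  · intro hmem; exact absurd (Finset.mem_univ _) hmem

/-- Lemma on example fusion operators:
`U_I^{(g)} U_I^{(h)} (U_I^{(gh)})* = Φ_a(g,h)·Φ_b(g,h)*`. -/
theorem UI_fusion (ω : G → G → G → Circle)
    (hω : ∀ g₁ g₂ g₃ g₄ : G,
      ω g₂ g₃ g₄ * ω g₁ (g₂ * g₃) g₄ * ω g₁ g₂ g₃ =
        ω (g₁ * g₂) g₃ g₄ * ω g₁ g₂ (g₃ * g₄))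
    (n : ℕ) (g h : G) :
    UI ω n g * UI ω n h * (UI ω n (g * h))ᴴ =
      PhiLeft ω n g h * (PhiRight ω n g h)ᴴ := by
  rw [UI, UI, UI, shift_mul, shift_mul_conjT, PhiLeft, PhiRight,
    Matrix.diagonal_conjTranspose, Matrix.diagonal_mul_diagonal]
  ext x w
  rw [Matrix.of_apply, Matrix.diagonal_apply]
  by_cases hxw : x = w
  · rw [if_pos hxw, if_pos hxw]
    simp only [Pi.star_apply]
    have key :
        (∏ j : Fin n, ω g (h * ((g * h)⁻¹ * x j.succ))
              ((h * ((g * h)⁻¹ * x j.succ))⁻¹ * (h * ((g * h)⁻¹ * x j.castSucc)))) *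
          (∏ j : Fin n, ω h ((g * h)⁻¹ * x j.succ)
              (((g * h)⁻¹ * x j.succ)⁻¹ * ((g * h)⁻¹ * x j.castSucc))) *
          (∏ j : Fin n, ω (g * h) ((g * h)⁻¹ * x j.succ)
              (((g * h)⁻¹ * x j.succ)⁻¹ * ((g * h)⁻¹ * x j.castSucc)))⁻¹ =
          ω g h (h⁻¹ * g⁻¹ * x 0) * (ω g h (h⁻¹ * g⁻¹ * x (Fin.last n)))⁻¹ := by
      rw [← Finset.prod_inv_distrib, ← Finset.prod_mul_distrib, ← Finset.prod_mul_distrib]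
      calc
        ∏ j : Fin n,
            ω g (h * ((g * h)⁻¹ * x j.succ))
                ((h * ((g * h)⁻¹ * x j.succ))⁻¹ * (h * ((g * h)⁻¹ * x j.castSucc))) *
              ω h ((g * h)⁻¹ * x j.succ)
                (((g * h)⁻¹ * x j.succ)⁻¹ * ((g * h)⁻¹ * x j.castSucc)) *
              (ω (g * h) ((g * h)⁻¹ * x j.succ)
                (((g * h)⁻¹ * x j.succ)⁻¹ * ((g * h)⁻¹ * x j.castSucc)))⁻¹
            = ∏ j : Fin n,
                ω g h (h⁻¹ * g⁻¹ * x j.castSucc) / ω g h (h⁻¹ * g⁻¹ * x j.succ) := by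
              refine Finset.prod_congr rfl fun j _ => ?_
              have e3 : (h * ((g * h)⁻¹ * x j.succ))⁻¹ * (h * ((g * h)⁻¹ * x j.castSucc)) =
                  (x j.succ)⁻¹ * x j.castSucc := by group
              have e4 : ((g * h)⁻¹ * x j.succ)⁻¹ * ((g * h)⁻¹ * x j.castSucc) =
                  (x j.succ)⁻¹ * x j.castSucc := by group
              have e1 : h * ((g * h)⁻¹ * x j.succ) = g⁻¹ * x j.succ := by group
              have e2 : (g * h)⁻¹ * x j.succ = h⁻¹ * (g⁻¹ * x j.succ) := by group
              have e5 : h⁻¹ * g⁻¹ * x j.castSucc = h⁻¹ * (g⁻¹ * x j.castSucc) := by group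
              have e6 : h⁻¹ * g⁻¹ * x j.succ = h⁻¹ * (g⁻¹ * x j.succ) := by group
              rw [e3, e4, e1, e2, e5, e6]
              exact cocycle_step ω hω g h (x j.succ) (x j.castSucc)
        _ = ω g h (h⁻¹ * g⁻¹ * x 0) / ω g h (h⁻¹ * g⁻¹ * x (Fin.last n)) :=
              telescope' (fun i => ω g h (h⁻¹ * g⁻¹ * x i))
        _ = ω g h (h⁻¹ * g⁻¹ * x 0) * (ω g h (h⁻¹ * g⁻¹ * x (Fin.last n)))⁻¹ :=
              div_eq_mul_inv _ _
    rw [← coe_prod', ← coe_prod', ← coe_prod', star_coe', star_coe']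
    exact_mod_cast congrArg (fun z : Circle => (z : ℂ)) key
  · rw [if_neg hxw, if_neg hxw]
end

section
/- Let G be a finite group, ω a 3-cocycle on G. For all g,k,l,h₀,h₁ ∈ G, the following identity of U(1) phases holds: [ω(l, l⁻¹k⁻¹h₁, h₁⁻¹h₀)·ω(l, l⁻¹k⁻¹gkl, l⁻¹k⁻¹g⁻¹h₁) / (ω(l, l⁻¹k⁻¹g⁻¹h₁, h₁⁻¹gh₀)·ω(k⁻¹gk, l, l⁻¹k⁻¹g⁻¹h₁))] · [ω(k, k⁻¹h₁, h₁⁻¹h₀)·ω(k, k⁻¹gk, k⁻¹g⁻¹h₁) / (ω(k, k⁻¹g⁻¹h₁, h₁⁻¹gh₀)·ω(g, k, k⁻¹g⁻¹h₁))] · [ω(kl, l⁻¹k⁻¹h₁, h₁⁻¹h₀)·ω(kl, l⁻¹k⁻¹gkl, l⁻¹k⁻¹g⁻¹h₁) / (ω(kl, l⁻¹k⁻¹g⁻¹h₁, h₁⁻¹gh₀)·ω(g, kl, l⁻¹k⁻¹g⁻¹h₁))]⁻¹ = ω(k, k⁻¹gk, l) / (ω(g,k,l)·ω(k,l,l⁻¹k⁻¹gkl)).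 -/
/-- the phase identity, obtained from five applications of the
3-cocycle relation, showing that the crossing-operator phases of the model
symmetry equal the inverse slant product `τ(ω)_g(k,l)⁻¹`. -/
theorem crossing_phase_identity {G : Type*} [Group G] [Fintype G]
    (ω : G → G → G → Circle)
    (hω : ∀ g₁ g₂ g₃ g₄ : G,
      ω g₂ g₃ g₄ * ω g₁ (g₂ * g₃) g₄ * ω g₁ g₂ g₃ =
        ω (g₁ * g₂) g₃ g₄ * ω g₁ g₂ (g₃ * g₄)) :
    ∀ g k l h₀ h₁ : G,
      (ω l (l⁻¹ * k⁻¹ * h₁) (h₁⁻¹ * h₀) * ω l (l⁻¹ * k⁻¹ * g * k * l) (l⁻¹ * k⁻¹ * g⁻¹ * h₁) /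
          (ω l (l⁻¹ * k⁻¹ * g⁻¹ * h₁) (h₁⁻¹ * g * h₀) *
            ω (k⁻¹ * g * k) l (l⁻¹ * k⁻¹ * g⁻¹ * h₁))) *
        (ω k (k⁻¹ * h₁) (h₁⁻¹ * h₀) * ω k (k⁻¹ * g * k) (k⁻¹ * g⁻¹ * h₁) /
          (ω k (k⁻¹ * g⁻¹ * h₁) (h₁⁻¹ * g * h₀) * ω g k (k⁻¹ * g⁻¹ * h₁))) *
        (ω (k * l) (l⁻¹ * k⁻¹ * h₁) (h₁⁻¹ * h₀) *
            ω (k * l) (l⁻¹ * k⁻¹ * g * k * l) (l⁻¹ * k⁻¹ * g⁻¹ * h₁) /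
          (ω (k * l) (l⁻¹ * k⁻¹ * g⁻¹ * h₁) (h₁⁻¹ * g * h₀) *
            ω g (k * l) (l⁻¹ * k⁻¹ * g⁻¹ * h₁)))⁻¹ =
      ω k (k⁻¹ * g * k) l / (ω g k l * ω k l (l⁻¹ * k⁻¹ * g * k * l)) := by
  intro g k l h₀ h₁
  have hc : ∀ a b c d : G, (ω b c d : ℂ) * ω a (b * c) d * ω a b c =
      ω (a * b) c d * ω a b (c * d) := by
    intro a b c d
    exact_mod_cast congrArg (fun z : Circle => (z : ℂ)) (hω a b c d)
  rw [← Circle.coe_inj]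
  push_cast
  have h1 := hc k l (l⁻¹ * k⁻¹ * g * k * l) (l⁻¹ * k⁻¹ * g⁻¹ * h₁)
  have h2 := hc k (k⁻¹ * g * k) l (l⁻¹ * k⁻¹ * g⁻¹ * h₁)
  have h3 := hc g k l (l⁻¹ * k⁻¹ * g⁻¹ * h₁)
  have h4 := hc k l (l⁻¹ * k⁻¹ * g⁻¹ * h₁) (h₁⁻¹ * g * h₀)
  have h5 := hc k l (l⁻¹ * k⁻¹ * h₁) (h₁⁻¹ * h₀)
  simp only [mul_assoc, mul_inv_cancel_left, inv_mul_cancel_left, inv_mul_cancel,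
    mul_inv_cancel, one_mul, mul_one, inv_inv] at h1 h2 h3 h4 h5 ⊢
  field_simp
  have H := congrArg₂ (· * ·) (congrArg₂ (· * ·) (congrArg₂ (· * ·)
    (congrArg₂ (· * ·) h1 h2.symm) h3) h4.symm) h5
  have hne : (((ω (k * l) (l⁻¹ * (k⁻¹ * (g * (k * l)))) (l⁻¹ * (k⁻¹ * (g⁻¹ * h₁))) : ℂ) * (ω k l (l⁻¹ * (k⁻¹ * h₁)) : ℂ)) * ((ω (k⁻¹ * (g * k)) l (l⁻¹ * (k⁻¹ * (g⁻¹ * h₁))) : ℂ) * (ω k (k⁻¹ * (g * (k * l))) (l⁻¹ * (k⁻¹ * (g⁻¹ * h₁))) : ℂ) * (ω k (k⁻¹ * (g * k)) l : ℂ)) * ((ω (g * k) l (l⁻¹ * (k⁻¹ * (g⁻¹ * h₁))) : ℂ) * (ω g k (k⁻¹ * (g⁻¹ * h₁)) : ℂ)) * ((ω l (l⁻¹ * (k⁻¹ * (g⁻¹ * h₁))) (h₁⁻¹ * (g * h₀)) : ℂ) * (ω k (k⁻¹ * (g⁻¹ * h₁)) (h₁⁻¹ * (g * h₀)) : ℂ)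 * (ω k l (l⁻¹ * (k⁻¹ * (g⁻¹ * h₁))) : ℂ)) * ((ω (k * l) (l⁻¹ * (k⁻¹ * h₁)) (h₁⁻¹ * h₀) : ℂ) * (ω k l (l⁻¹ * (k⁻¹ * h₀)) : ℂ))) ≠ 0 := by
    apply_rules [mul_ne_zero, Circle.coe_ne_zero]
  apply mul_right_cancel₀ hne
  linear_combination ((ω k (k⁻¹ * (g * k)) l : ℂ) * (ω l (l⁻¹ * (k⁻¹ * (g⁻¹ * h₁))) (h₁⁻¹ * (g * h₀)) : ℂ) * (ω (k⁻¹ * (g * k)) l (l⁻¹ * (k⁻¹ * (g⁻¹ * h₁))) : ℂ) * (ω k (k⁻¹ * (g⁻¹ * h₁)) (h₁⁻¹ * (g * h₀)) : ℂ) * (ω g k (k⁻¹ * (g⁻¹ * h₁)) : ℂ) * (ω (k * l) (l⁻¹ * (k⁻¹ * h₁)) (h₁⁻¹ * h₀) : ℂ) * (ω (k * l) (l⁻¹ * (k⁻¹ * (g * (k * l)))) (l⁻¹ * (k⁻¹ * (g⁻¹ * h₁))) : ℂ)) * H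
end

section
/- Let G be a finite group, A a unital C*-algebra (or the algebra of n×n matrices), and α_≥ : G → Aut(A) a map with α_≥^{(1)} = id such that for each g,h ∈ G there is a unitary Φ(g,h) ∈ A with α_≥^{(g)} ∘ α_≥^{(h)} = Ad[Φ(g,h)] ∘ α_≥^{(gh)}. Suppose the Φ can be chosen so that Φ(f,g)·Φ(fg,h) = α_≥^{(f)}(Φ(g,h))·Φ(f,gh) for all f,g,h ∈ G. On A ⊗ End(ℂ[G]) define V(g) := Σ_{k∈G} Φ(g,k) ⊗ |k⟩⟨gk|, and set β^{(g)} := Ad[V(g)*] ∘ (α_≥^{(g)} ⊗ id). Then g ↦ β^{(g)} is a group homomorphism G → Aut(A ⊗ End(ℂ[G])). -/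
open Matrix Kronecker

/-- The extension `φ ⊗ id` of a map `φ` on `n×n` matrices to an operation on
`Matrix (Fin n × G) (Fin n × G) ℂ ≅ A ⊗ End(ℂ[G])`, acting blockwise. -/
noncomputable def tensorExt {n : ℕ} {G : Type*}
    (φ : Matrix (Fin n) (Fin n) ℂ → Matrix (Fin n) (Fin n) ℂ)
    (M : Matrix (Fin n × G) (Fin n × G) ℂ) : Matrix (Fin n × G) (Fin n × G) ℂ :=
  Matrix.of fun p q => φ (Matrix.of fun i j => M (i, p.2) (j, q.2)) p.1 q.1

namespace DecoupledAux

variable {n : ℕ} {G : Type*}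

/-- Block extraction. -/
def blk (M : Matrix (Fin n × G) (Fin n × G) ℂ) (p q : G) : Matrix (Fin n) (Fin n) ℂ :=
  Matrix.of fun i j => M (i, p) (j, q)

lemma blk_ext {M N : Matrix (Fin n × G) (Fin n × G) ℂ}
    (h : ∀ p q, blk M p q = blk N p q) : M = N := by
  ext ⟨i, p⟩ ⟨j, q⟩
  exact congrFun (congrFun (h p q) i) j

lemma blk_mul [Fintype G] (M N : Matrix (Fin n × G) (Fin n × G) ℂ) (p q : G) :
    blk (M * N) p q = ∑ r : G, blk M p r * blk N r q := by
  ext i j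
  simp only [blk, Matrix.of_apply, Matrix.mul_apply, Fintype.sum_prod_type,
    Matrix.sum_apply]
  exact Finset.sum_comm

lemma blk_conjT (M : Matrix (Fin n × G) (Fin n × G) ℂ) (p q : G) :
    blk Mᴴ p q = (blk M q p)ᴴ := by
  ext i j
  simp [blk, Matrix.conjTranspose_apply]

lemma blk_tensorExt (φ : Matrix (Fin n) (Fin n) ℂ → Matrix (Fin n) (Fin n) ℂ)
    (M : Matrix (Fin n × G) (Fin n × G) ℂ) (p q : G) :
    blk (tensorExt φ M) p q = φ (blk M p q) := rfl

lemma blk_kron_std [DecidableEq G] (A : Matrix (Fin n) (Fin n) ℂ) (k l p q : G) :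
    blk (A ⊗ₖ Matrix.single k l (1 : ℂ)) p q
      = if k = p ∧ l = q then A else 0 := by
  ext i j
  by_cases h : k = p ∧ l = q <;>
    simp [blk, Matrix.kroneckerMap_apply, Matrix.single, h]

end DecoupledAux

section Main

variable {G : Type*} [Group G] [Fintype G] [DecidableEq G] {n : ℕ}

open DecoupledAux in
lemma blk_V' (Φ : G → G → Matrix (Fin n) (Fin n) ℂ) (g p q : G) :
    blk (∑ k : G, (Φ g k) ⊗ₖ Matrix.single k (g * k) (1 : ℂ)) p q
      = if q = g * p then Φ g p else 0 := by
  ext i j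
  simp only [blk, Matrix.of_apply, Matrix.sum_apply, Matrix.kroneckerMap_apply,
    Matrix.single, mul_ite, mul_one, mul_zero, ite_and]
  rw [Finset.sum_ite_eq' Finset.univ p]
  simp [eq_comm]
  split <;> simp

open DecoupledAux in
lemma blk_beta
    (α : G → (Matrix (Fin n) (Fin n) ℂ ≃⋆ₐ[ℂ] Matrix (Fin n) (Fin n) ℂ))
    (Φ : G → G → Matrix (Fin n) (Fin n) ℂ)
    (V : G → Matrix (Fin n × G) (Fin n × G) ℂ)
    (hV : ∀ g : G,
      V g = ∑ k : G, (Φ g k) ⊗ₖ Matrix.single k (g * k) (1 : ℂ))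
    (β : G → Matrix (Fin n × G) (Fin n × G) ℂ → Matrix (Fin n × G) (Fin n × G) ℂ)
    (hβ : ∀ g M, β g M = (V g)ᴴ * tensorExt (⇑(α g)) M * V g)
    (g : G) (M : Matrix (Fin n × G) (Fin n × G) ℂ) (p q : G) :
    blk (β g M) p q
      = (Φ g (g⁻¹ * p))ᴴ * α g (blk M (g⁻¹ * p) (g⁻¹ * q)) * Φ g (g⁻¹ * q) := by
  have hbv : ∀ p q : G, blk (V g) p q = if q = g * p then Φ g p else 0 := by
    intro p q; rw [hV]; exact blk_V' Φ g p q
  have hc : ∀ r s : G, (s = g * r) ↔ (r = g⁻¹ * s) := by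
    intro r s
    constructor <;> intro h <;> simp [h]
  rw [hβ]
  rw [blk_mul, Finset.sum_congr rfl (fun s _ => by rw [blk_mul])]
  simp only [blk_conjT, blk_tensorExt, hbv, Finset.sum_mul, Finset.mul_sum]
  simp only [apply_ite conjTranspose, conjTranspose_zero, ite_mul, mul_ite,
    zero_mul, mul_zero]
  simp only [hc, Finset.sum_ite_irrel, Finset.sum_const_zero,
    Finset.sum_ite_eq', Finset.mem_univ, if_true]

end Main


open DecoupledAux

/-- given `α_≥ : G → Aut(A)` with `α_≥^{(1)} = id` and unitary
fusion operators `Φ(g,h)` satisfying `α_≥^{(g)}∘α_≥^{(h)} = Ad[Φ(g,h)]∘α_≥^{(gh)}`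
and the phase-free pentagon `Φ(f,g)Φ(fg,h) = α_≥^{(f)}(Φ(g,h))Φ(f,gh)`, the
modified restriction `β^{(g)} = Ad[V(g)*]∘(α_≥^{(g)} ⊗ id)`, with
`V(g) = Σ_k Φ(g,k) ⊗ |k⟩⟨gk|`, is a group homomorphism. -/
theorem decoupled_right_restriction {G : Type*} [Group G] [Fintype G] [DecidableEq G]
    (n : ℕ)
    (α : G → (Matrix (Fin n) (Fin n) ℂ ≃⋆ₐ[ℂ] Matrix (Fin n) (Fin n) ℂ))
    (hα1 : ∀ M, α 1 M = M)
    (Φ : G → G → Matrix (Fin n) (Fin n) ℂ)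
    (hΦu : ∀ g h, Φ g h ∈ Matrix.unitaryGroup (Fin n) ℂ)
    (hAd : ∀ g h : G, ∀ M : Matrix (Fin n) (Fin n) ℂ,
      α g (α h M) = Φ g h * α (g * h) M * (Φ g h)ᴴ)
    (hPent : ∀ f g h : G,
      Φ f g * Φ (f * g) h = α f (Φ g h) * Φ f (g * h))
    (V : G → Matrix (Fin n × G) (Fin n × G) ℂ)
    (hV : ∀ g : G,
      V g = ∑ k : G, (Φ g k) ⊗ₖ Matrix.single k (g * k) (1 : ℂ))
    (β : G → Matrix (Fin n × G) (Fin n × G) ℂ → Matrix (Fin n × G) (Fin n × G) ℂ)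
    (hβ : ∀ g M, β g M = (V g)ᴴ * tensorExt (⇑(α g)) M * V g) :
    (∀ g h : G, ∀ M, β g (β h M) = β (g * h) M) ∧ (∀ M, β 1 M = M) := by
  have hu : ∀ u v : G, (Φ u v)ᴴ * Φ u v = 1 := by
    intro u v
    simpa [Matrix.star_eq_conjTranspose] using (hΦu u v).1
  have huR : ∀ u v : G, Φ u v * (Φ u v)ᴴ = 1 := by
    intro u v
    simpa [Matrix.star_eq_conjTranspose] using (hΦu u v).2
  constructor
  · intro g h M
    apply blk_ext; intro p q
    rw [blk_beta α Φ V hV β hβ, blk_beta α Φ V hV β hβ, blk_beta α Φ V hV β hβ]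
    have e1 : (g*h)⁻¹ * p = h⁻¹ * (g⁻¹ * p) := by group
    have e2 : (g*h)⁻¹ * q = h⁻¹ * (g⁻¹ * q) := by group
    rw [e1, e2]
    have hKey : ∀ c : G, (Φ g h)ᴴ * (α g (Φ h c) * Φ g (h*c)) = Φ (g*h) c := by
      intro c
      rw [← hPent g h c, ← mul_assoc, hu, one_mul]
    have hKey' : ∀ c : G, ((Φ g (h*c))ᴴ * (α g (Φ h c))ᴴ) * Φ g h = (Φ (g*h) c)ᴴ := by
      intro c
      have := congrArg conjTranspose (hKey c)
      simpa [Matrix.conjTranspose_mul, mul_assoc] using this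
    rw [← hKey (h⁻¹ * (g⁻¹ * q)), ← hKey' (h⁻¹ * (g⁻¹ * p))]
    rw [show h * (h⁻¹ * (g⁻¹ * p)) = g⁻¹ * p from by group,
        show h * (h⁻¹ * (g⁻¹ * q)) = g⁻¹ * q from by group]
    rw [_root_.map_mul, _root_.map_mul, hAd g h]
    simp only [← Matrix.star_eq_conjTranspose, map_star]
    simp only [mul_assoc]
  · intro M
    apply blk_ext; intro p q
    rw [blk_beta α Φ V hV β hβ]
    simp only [inv_one, one_mul, hα1]
    have h1 : ∀ c : G, Φ 1 c = Φ 1 1 := by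
      intro c
      have hp := hPent 1 1 c
      simp only [one_mul, hα1] at hp
      have h2 := congrArg (fun X => X * (Φ 1 c)ᴴ) hp
      simpa [mul_assoc, huR 1 c] using h2.symm
    have hcen : ∀ X : Matrix (Fin n) (Fin n) ℂ, X = Φ 1 1 * X * (Φ 1 1)ᴴ := by
      intro X
      have := hAd 1 1 X
      simpa [hα1] using this
    have key : ∀ X : Matrix (Fin n) (Fin n) ℂ, (Φ 1 1)ᴴ * X * Φ 1 1 = X := by
      intro X
      calc (Φ 1 1)ᴴ * X * Φ 1 1
          = (Φ 1 1)ᴴ * (Φ 1 1 * X * (Φ 1 1)ᴴ) * Φ 1 1 := by rw [← hcen]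
        _ = ((Φ 1 1)ᴴ * Φ 1 1) * X * ((Φ 1 1)ᴴ * Φ 1 1) := by
            simp only [mul_assoc]
        _ = X := by rw [hu, one_mul, mul_one]
    rw [h1 p, h1 q, key]
end

section
/- Let G be a finite group, A a unital C*-algebra (or matrix algebra), α : G → Aut(A) a group homomorphism, and α_≥ : G → Aut(A) a second family with α_≥^{(1)} = id. Suppose for each g,k there are unitaries X_g(k) ∈ A with α^{(k)} ∘ α_≥^{(k⁻¹gk)} ∘ α^{(k⁻¹)} ∘ (α_≥^{(g)})⁻¹ = Ad[X_g(k)], chosen so that α^{(k)}(X_{k⁻¹gk}(l))·X_g(k) = X_g(kl) for all g,k,l ∈ G. On A ⊗ End(ℂ[G]) define V_g := Σ_k X_g(k) ⊗ |k⟩⟨k| and set β_≥^{(g)} := Ad[V_g] ∘ (α_≥^{(g)} ⊗ id), and let α̃^{(k)} := α^{(k)} ⊗ Ad[L^{(k)}] where L^{(k)}|l⟩ = |kl⟩. Then β_≥ is covariant: α̃^{(k)} ∘ β_≥^{(k⁻¹gk)} ∘ α̃^{(k⁻¹)} = β_≥^{(g)} for all g,k ∈ G. -/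
set_option linter.unusedSectionVars false
set_option linter.unusedVariables false
set_option maxHeartbeats 1000000


open Matrix Kronecker

/-- The left regular representation matrix `L^{(k)}|l⟩ = |kl⟩` on `ℂ[G]`. -/
def Lreg {G : Type*} [Group G] [DecidableEq G] (k : G) : Matrix G G ℂ :=
  Matrix.of fun x y => if x = k * y then (1 : ℂ) else 0

section helpers
variable {n : ℕ} {G : Type*} [Group G] [Fintype G] [DecidableEq G]

lemma Lreg_apply (k x y : G) : Lreg k x y = if y = k⁻¹ * x then 1 else 0 := by
  unfold Lreg
  simp only [Matrix.of_apply]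
  congr 1
  simp [eq_inv_mul_iff_mul_eq, eq_comm]

lemma conjL (k : G) (M : Matrix (Fin n × G) (Fin n × G) ℂ) :
    ((1 : Matrix (Fin n) (Fin n) ℂ) ⊗ₖ Lreg k) * M * ((1 : Matrix (Fin n) (Fin n) ℂ) ⊗ₖ Lreg k)ᴴ
      = Matrix.of fun p q => M (p.1, k⁻¹ * p.2) (q.1, k⁻¹ * q.2) := by
  ext ⟨i, x⟩ ⟨j, y⟩
  simp [Matrix.mul_apply, Matrix.conjTranspose_apply, Lreg_apply, Matrix.one_apply,
    Fintype.sum_prod_type, ite_mul, mul_ite, apply_ite]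

lemma conjV (Y : G → Matrix (Fin n) (Fin n) ℂ) (N : Matrix (Fin n × G) (Fin n × G) ℂ) :
    (∑ c : G, Y c ⊗ₖ Matrix.single c c (1 : ℂ)) * N *
      (∑ c : G, Y c ⊗ₖ Matrix.single c c (1 : ℂ))ᴴ
    = Matrix.of fun p q =>
        (Y p.2 * (Matrix.of fun i j => N (i, p.2) (j, q.2)) * (Y q.2)ᴴ) p.1 q.1 := by
  ext ⟨i, x⟩ ⟨j, y⟩
  simp [Matrix.mul_apply, Matrix.conjTranspose_apply, Matrix.sum_apply,
    Matrix.single, Fintype.sum_prod_type, ite_mul, mul_ite, apply_ite,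
    Finset.mul_sum, Finset.sum_mul, ite_and, Finset.sum_ite_eq, Finset.sum_ite_eq']

lemma key
    (α : G → (Matrix (Fin n) (Fin n) ℂ ≃⋆ₐ[ℂ] Matrix (Fin n) (Fin n) ℂ))
    (αg : G → (Matrix (Fin n) (Fin n) ℂ ≃⋆ₐ[ℂ] Matrix (Fin n) (Fin n) ℂ))
    (X : G → G → Matrix (Fin n) (Fin n) ℂ)
    (hXu : ∀ g k, X g k ∈ Matrix.unitaryGroup (Fin n) ℂ)
    (hX : ∀ g k : G, ∀ M : Matrix (Fin n) (Fin n) ℂ,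
      α k (αg (k⁻¹ * g * k) (α k⁻¹ ((αg g).symm M))) = X g k * M * (X g k)ᴴ)
    (hXc : ∀ g k l : G, α k (X (k⁻¹ * g * k) l) * X g k = X g (k * l))
    (g k x y : G) (N : Matrix (Fin n) (Fin n) ℂ) :
    α k (X (k⁻¹ * g * k) (k⁻¹ * x) * αg (k⁻¹ * g * k) (α k⁻¹ N) *
        (X (k⁻¹ * g * k) (k⁻¹ * y))ᴴ)
      = X g x * αg g N * (X g y)ᴴ := by
  have u1 : (X g k)ᴴ * X g k = 1 := by
    have := (hXu g k).1
    simpa [Matrix.star_eq_conjTranspose] using this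
  have u2 : X g k * (X g k)ᴴ = 1 := by
    have := (hXu g k).2
    simpa [Matrix.star_eq_conjTranspose] using this
  have h1 : ∀ z : G, α k (X (k⁻¹ * g * k) (k⁻¹ * z)) = X g z * (X g k)ᴴ := by
    intro z
    have h := hXc g k (k⁻¹ * z)
    have hz : k * (k⁻¹ * z) = z := by group
    rw [hz] at h
    calc α k (X (k⁻¹ * g * k) (k⁻¹ * z))
        = α k (X (k⁻¹ * g * k) (k⁻¹ * z)) * (X g k * (X g k)ᴴ) := by rw [u2, mul_one]
      _ = (α k (X (k⁻¹ * g * k) (k⁻¹ * z)) * X g k) * (X g k)ᴴ := (mul_assoc _ _ _).symm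
      _ = X g z * (X g k)ᴴ := by rw [h]
  have h2 : α k (αg (k⁻¹ * g * k) (α k⁻¹ N)) = X g k * αg g N * (X g k)ᴴ := by
    have := hX g k (αg g N)
    rwa [StarAlgEquiv.symm_apply_apply] at this
  have hstar : α k ((X (k⁻¹ * g * k) (k⁻¹ * y))ᴴ) = (α k (X (k⁻¹ * g * k) (k⁻¹ * y)))ᴴ := by
    rw [← Matrix.star_eq_conjTranspose, ← Matrix.star_eq_conjTranspose, map_star]
  rw [_root_.map_mul, _root_.map_mul, hstar, h1, h1, h2, Matrix.conjTranspose_mul,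
    Matrix.conjTranspose_conjTranspose]
  have cancel : ∀ A : Matrix (Fin n) (Fin n) ℂ, A * (X g k)ᴴ * X g k = A := by
    intro A; rw [mul_assoc, u1, mul_one]
  calc X g x * (X g k)ᴴ * (X g k * αg g N * (X g k)ᴴ) * (X g k * (X g y)ᴴ)
      = (X g x * (X g k)ᴴ * X g k) * αg g N * ((X g k)ᴴ * X g k) * (X g y)ᴴ := by
        simp only [mul_assoc]
    _ = X g x * αg g N * (X g y)ᴴ := by rw [cancel, u1, mul_one]

end helpers

/-- if the crossing operators `X_g(k)` of a right restriction
`α_≥` of a symmetry `α` satisfy the exact twisted cocycle relation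
`α^{(k)}(X_{k⁻¹gk}(l))·X_g(k) = X_g(kl)`, then the modified right restriction
`β_≥^{(g)} = Ad[V_g]∘(α_≥^{(g)} ⊗ id)` with `V_g = Σ_k X_g(k) ⊗ |k⟩⟨k|` is
covariant for the stacked symmetry `α̃^{(k)} = α^{(k)} ⊗ Ad[L^{(k)}]`. -/
theorem covariant_right_restriction {G : Type*} [Group G] [Fintype G] [DecidableEq G]
    (n : ℕ)
    (α : G → (Matrix (Fin n) (Fin n) ℂ ≃⋆ₐ[ℂ] Matrix (Fin n) (Fin n) ℂ))
    (hα : ∀ k l : G, ∀ M, α k (α l M) = α (k * l) M)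
    (hα1 : ∀ M, α 1 M = M)
    (αg : G → (Matrix (Fin n) (Fin n) ℂ ≃⋆ₐ[ℂ] Matrix (Fin n) (Fin n) ℂ))
    (hαg1 : ∀ M, αg 1 M = M)
    (X : G → G → Matrix (Fin n) (Fin n) ℂ)
    (hXu : ∀ g k, X g k ∈ Matrix.unitaryGroup (Fin n) ℂ)
    (hX : ∀ g k : G, ∀ M : Matrix (Fin n) (Fin n) ℂ,
      α k (αg (k⁻¹ * g * k) (α k⁻¹ ((αg g).symm M))) = X g k * M * (X g k)ᴴ)
    (hXc : ∀ g k l : G, α k (X (k⁻¹ * g * k) l) * X g k = X g (k * l))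
    (V : G → Matrix (Fin n × G) (Fin n × G) ℂ)
    (hV : ∀ g : G, V g = ∑ k : G, (X g k) ⊗ₖ Matrix.single k k (1 : ℂ))
    (βg : G → Matrix (Fin n × G) (Fin n × G) ℂ → Matrix (Fin n × G) (Fin n × G) ℂ)
    (hβg : ∀ g M, βg g M = V g * tensorExt (⇑(αg g)) M * (V g)ᴴ)
    (αt : G → Matrix (Fin n × G) (Fin n × G) ℂ → Matrix (Fin n × G) (Fin n × G) ℂ)
    (hαt : ∀ k M,
      αt k M = ((1 : Matrix (Fin n) (Fin n) ℂ) ⊗ₖ Lreg k) * tensorExt (⇑(α k)) M *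
        ((1 : Matrix (Fin n) (Fin n) ℂ) ⊗ₖ Lreg k)ᴴ) :
    ∀ g k : G, ∀ M, αt k (βg (k⁻¹ * g * k) (αt k⁻¹ M)) = βg g M := by
  intro g k M
  simp only [hαt, hβg, hV, conjL, conjV]
  ext ⟨i, x⟩ ⟨j, y⟩
  simp only [tensorExt, Matrix.of_apply, inv_inv, mul_inv_cancel_left]
  exact congrFun (congrFun (key α αg X hXu hX hXc g k x y
    (Matrix.of fun c d => M (c, x) (d, y))) i) j
end

section
/- Let G be a finite group, ω : G³ → U(1) a 3-cocycle normalized so that ω(1,g,h) = ω(g,1,h) = ω(g,h,1) = 1. For j ∈ ℤ define phases on pairs (g_j, g_{j+1}) ∈ G² by v^{(g)}(g_j,g_{j+1}) = ω(g, g_{j+1}, g_{j+1}⁻¹ g_j). Then for any finite sequence g_a,...,g_b ∈ G and any g,h ∈ G: ∏_{j=a+1}^{b} [ω(h,g_j,g_j⁻¹g_{j-1})·ω(g,hg_j,g_j⁻¹g_{j-1})/ω(gh,g_j,g_j⁻¹g_{j-1})] = ω(g,h,g_a)/ω(g,h,g_b). -/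
open Finset in
/-- the telescoping product identity at the computational core of
the example symmetry: for a normalized 3-cocycle `ω` and any finite sequence
`g_a, …, g_b` in `G`,
`∏_{j=a+1}^{b} ω(h,g_j,g_j⁻¹g_{j-1})·ω(g,hg_j,g_j⁻¹g_{j-1})/ω(gh,g_j,g_j⁻¹g_{j-1})
  = ω(g,h,g_a)/ω(g,h,g_b)`. -/
theorem telescoping_cocycle_product {G : Type*} [Group G] [Fintype G]
    (ω : G → G → G → Circle)
    (hω : ∀ g₁ g₂ g₃ g₄ : G,
      ω g₂ g₃ g₄ * ω g₁ (g₂ * g₃) g₄ * ω g₁ g₂ g₃ =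
        ω (g₁ * g₂) g₃ g₄ * ω g₁ g₂ (g₃ * g₄))
    (hnorm₁ : ∀ g h : G, ω 1 g h = 1)
    (hnorm₂ : ∀ g h : G, ω g 1 h = 1)
    (hnorm₃ : ∀ g h : G, ω g h 1 = 1)
    (a b : ℤ) (hab : a ≤ b) (gseq : ℤ → G) (g h : G) :
    (∏ j ∈ Finset.Icc (a + 1) b,
        (ω h (gseq j) ((gseq j)⁻¹ * gseq (j - 1)) *
            ω g (h * gseq j) ((gseq j)⁻¹ * gseq (j - 1)) /
          ω (g * h) (gseq j) ((gseq j)⁻¹ * gseq (j - 1)))) =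
      ω g h (gseq a) / ω g h (gseq b) := by
  obtain ⟨n, rfl⟩ : ∃ n : ℕ, b = a + n := ⟨(b - a).toNat, by omega⟩
  clear hab
  induction n with
  | zero => simp
  | succ n ih =>
    have hcast : (a + (n + 1 : ℕ) : ℤ) = (a + n) + 1 := by push_cast; ring
    have hins : Finset.Icc (a + 1) (a + (n : ℤ) + 1) =
        insert (a + (n : ℤ) + 1) (Finset.Icc (a + 1) (a + (n : ℤ))) := by
      ext j; simp only [Finset.mem_Icc, Finset.mem_insert]; omega
    rw [hcast, hins, Finset.prod_insert (by simp), ih]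
    have hx : (a + n + 1 : ℤ) - 1 = a + n := by ring
    rw [hx]
    set x := gseq (a + n + 1) with hxdef
    set y := gseq (a + (n : ℤ)) with hydef
    have hy : gseq (a + n : ℤ) = y := by rw [hydef]
    have key := hω g h x (x⁻¹ * y)
    rw [mul_inv_cancel_left] at key
    have key' : ω h x (x⁻¹ * y) * ω g (h * x) (x⁻¹ * y) /
        ω (g * h) x (x⁻¹ * y) = ω g h y / ω g h x := by
      rw [div_eq_div_iff_mul_eq_mul, key, mul_comm]
    rw [key', mul_comm, div_mul_div_comm, mul_comm (ω g h y) (ω g h x), mul_div_mul_right_eq_div]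
end
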